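/- Let X ∈ ℝ^{N×T} be a matrix of rank r < min{N,T} admitting a thin SVD X = UΣVᵀ with ‖U‖_{2,∞} ≤ √(μ₁ r / N) and ‖V‖_{2,∞} ≤ √(μ₂ r / T) for constants μ₁, μ₂ ≥ 1. Fix δ ∈ (0,1) and ε ∈ (0,1). Let I be a subset of {1,…,N} of size at least 3 r μ₁ ln(2r/δ)/ε² chosen uniformly at random among all subsets of that size, and independently let J be a subset of {1,…,T} of size at least 3 r μ₂ ln(2r/δ)/ε² chosen uniformly at random among all subsets of that size. Then the submatrix X(I,J) (the matrix of entries of X with row index in I and column index in J) has rank r with probability at least (1 − δ)². -/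

import Mathlib

open Matrix
open scoped Classical

/-- The `(2,∞)`-norm of a matrix: the maximum Euclidean norm of a row. -/
noncomputable def rowNorm2Inf {m n : Type*} [Fintype m] [Fintype n] (A : Matrix m n ℝ) : ℝ :=
  ⨆ i, Real.sqrt (∑ j, A i j ^ 2)

/-- `IsThinSVD X r U S V` : `X = U S Vᵀ` is a thin singular value decomposition of the
rank-`r` matrix `X`. -/
def IsThinSVD {m n : Type*} [Fintype m] [Fintype n] (X : Matrix m n ℝ) (r : ℕ)
    (U : Matrix m (Fin r) ℝ) (S : Matrix (Fin r) (Fin r) ℝ) (V : Matrix n (Fin r) ℝ) : Prop :=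
  X = U * S * Vᵀ ∧ Uᵀ * U = 1 ∧ Vᵀ * V = 1 ∧ S.IsDiag ∧
    (∀ i, 0 < S i i) ∧ ∀ i j : Fin r, i ≤ j → S j j ≤ S i i

open Finset Submodule Module

namespace CUR

variable {n r : ℕ}

noncomputable def rowE (W : Matrix (Fin n) (Fin r) ℝ) (i : Fin n) :
    EuclideanSpace ℝ (Fin r) := (WithLp.linearEquiv 2 ℝ (Fin r → ℝ)).symm (W i)

noncomputable def dSpan (W : Matrix (Fin n) (Fin r) ℝ) (I : Finset (Fin n)) : ℕ :=
  finrank ℝ (span ℝ (rowE W '' (I : Set (Fin n))))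

lemma dSpan_le (W : Matrix (Fin n) (Fin r) ℝ) (I : Finset (Fin n)) : dSpan W I ≤ r := by
  have h := Submodule.finrank_le (span ℝ (rowE W '' (I : Set (Fin n))))
  simpa [dSpan, finrank_euclideanSpace_fin] using h

lemma dSpan_mono (W : Matrix (Fin n) (Fin r) ℝ) {I J : Finset (Fin n)} (h : I ⊆ J) :
    dSpan W I ≤ dSpan W J :=
  Submodule.finrank_mono (span_mono (Set.image_mono (by exact_mod_cast h)))

lemma rank_submatrix_eq_dSpan (W : Matrix (Fin n) (Fin r) ℝ) (I : Finset (Fin n)) :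
    (W.submatrix (fun i : ↥I => (i : Fin n)) id).rank = dSpan W I := by
  set A := W.submatrix (fun i : ↥I => (i : Fin n)) id with hA
  rw [← Matrix.rank_transpose]
  have h1 : (Aᵀ).rank = finrank ℝ (LinearMap.range (Aᵀ).mulVecLin) := rfl
  rw [h1, Matrix.range_mulVecLin]; change finrank ℝ (span ℝ (Set.range A)) = dSpan W I
  have h2 : Set.range A = (Matrix.of.symm W) '' (I : Set (Fin n)) := by
    have : Set.range A = Set.range (fun i : ↥I => W (i : Fin n)) := rfl
    rw [this]
    rw [show (fun i : ↥I => W (i : Fin n)) = (Matrix.of.symm W) ∘ (fun i : ↥I => (i : Fin n)) from rfl,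
      Set.range_comp]
    congr 1
    ext x
    simp
  rw [h2]
  unfold dSpan
  have h3 : rowE W '' (I : Set (Fin n)) =
      (WithLp.linearEquiv 2 ℝ (Fin r → ℝ)).symm '' ((Matrix.of.symm W) '' (I : Set (Fin n))) := by
    rw [Set.image_image]; rfl
  rw [h3, ← LinearEquiv.coe_coe, ← Submodule.map_span]
  exact (LinearEquiv.finrank_map_eq _ _).symm

lemma dSpan_insert_le (W : Matrix (Fin n) (Fin r) ℝ) (I : Finset (Fin n)) (i : Fin n) :
    dSpan W I ≤ dSpan W (insert i I) := dSpan_mono W (Finset.subset_insert _ _)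

lemma dSpan_insert_eq_iff (W : Matrix (Fin n) (Fin r) ℝ) (I : Finset (Fin n)) (i : Fin n) :
    dSpan W (insert i I) = dSpan W I ↔
      rowE W i ∈ span ℝ (rowE W '' (I : Set (Fin n))) := by
  have himg : rowE W '' ((insert i I : Finset (Fin n)) : Set (Fin n)) =
      insert (rowE W i) (rowE W '' (I : Set (Fin n))) := by
    rw [Finset.coe_insert, Set.image_insert_eq]
  unfold dSpan
  constructor
  · intro h
    have hle : span ℝ (rowE W '' (I : Set (Fin n))) ≤
        span ℝ (rowE W '' ((insert i I : Finset (Fin n)) : Set (Fin n))) :=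
      span_mono (Set.image_mono (by exact_mod_cast Finset.subset_insert i I))
    have heq : span ℝ (rowE W '' (I : Set (Fin n))) =
        span ℝ (rowE W '' ((insert i I : Finset (Fin n)) : Set (Fin n))) :=
      Submodule.eq_of_le_of_finrank_eq hle (by omega)
    have : rowE W i ∈ span ℝ (rowE W '' ((insert i I : Finset (Fin n)) : Set (Fin n))) := by
      apply subset_span
      rw [himg]; exact Set.mem_insert _ _
    rwa [← heq] at this
  · intro h
    have : span ℝ (rowE W '' ((insert i I : Finset (Fin n)) : Set (Fin n))) =
        span ℝ (rowE W '' (I : Set (Fin n))) := by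
      rw [himg, Submodule.span_insert, sup_eq_right]
      rwa [span_le, Set.singleton_subset_iff]
    rw [this]


lemma sum_inner_rowE_sq (W : Matrix (Fin n) (Fin r) ℝ) (hW : Wᵀ * W = 1)
    (v : EuclideanSpace ℝ (Fin r)) :
    ∑ i : Fin n, (inner ℝ (rowE W i) v : ℝ) ^ 2 = ∑ j : Fin r, (v j) ^ 2 := by
  have hin : ∀ i, (inner ℝ (rowE W i) v : ℝ) = ∑ j, W i j * v j := by
    intro i
    rw [PiLp.inner_apply]
    simp [rowE, RCLike.inner_apply, WithLp.linearEquiv, mul_comm]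
  have h1 : ∑ i : Fin n, (inner ℝ (rowE W i) v : ℝ) ^ 2
      = (W *ᵥ (fun j => v j)) ⬝ᵥ (W *ᵥ (fun j => v j)) := by
    simp only [dotProduct, Matrix.mulVec, dotProduct]
    refine Finset.sum_congr rfl fun i _ => ?_
    rw [hin i, sq]
  rw [h1, Matrix.dotProduct_mulVec, ← Matrix.vecMul_transpose, Matrix.vecMul_vecMul, hW,
    Matrix.vecMul_one]
  simp [dotProduct, sq]

lemma count_outside (hn : 0 < n) (W : Matrix (Fin n) (Fin r) ℝ) (hW : Wᵀ * W = 1)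
    (μ : ℝ) (hμ : 0 ≤ μ) (hrow : ∀ i, ∑ j, W i j ^ 2 ≤ μ * r / n)
    (V : Submodule ℝ (EuclideanSpace ℝ (Fin r))) (hV : finrank ℝ V ≤ r) :
    ((r : ℝ) - finrank ℝ V) ≤
      ((univ.filter (fun i : Fin n => rowE W i ∉ V)).card : ℝ) * (μ * r / n) := by
  set E := EuclideanSpace ℝ (Fin r)
  have hfr : finrank ℝ E = r := finrank_euclideanSpace_fin
  have hVbot : finrank ℝ ↥Vᗮ = r - finrank ℝ V := by
    have h := Submodule.finrank_add_finrank_orthogonal V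
    rw [hfr] at h
    omega
  set b := stdOrthonormalBasis ℝ ↥Vᗮ
  set w : Fin (finrank ℝ ↥Vᗮ) → E := fun t => ((b t : ↥Vᗮ) : E) with hw
  have hwon : Orthonormal ℝ w := by
    constructor
    · intro t
      have := b.orthonormal.1 t
      rwa [show ‖w t‖ = ‖b t‖ from rfl]
    · intro s t hst
      have := b.orthonormal.2 hst
      rwa [show (inner ℝ (w s) (w t) : ℝ) = inner ℝ (b s) (b t) from
        (Submodule.coe_inner Vᗮ (b s) (b t)).symm]
  have hwmem : ∀ t, w t ∈ Vᗮ := fun t => SetLike.coe_mem _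
  -- total mass
  have htotal : ∑ i : Fin n, ∑ t, (inner ℝ (rowE W i) (w t) : ℝ) ^ 2
      = ((r : ℝ) - finrank ℝ V) := by
    rw [Finset.sum_comm]
    have : ∀ t, ∑ i : Fin n, (inner ℝ (rowE W i) (w t) : ℝ) ^ 2 = 1 := by
      intro t
      rw [sum_inner_rowE_sq W hW]
      have hnorm : ‖w t‖ = 1 := hwon.1 t
      have : (inner ℝ (w t) (w t) : ℝ) = 1 := by
        rw [real_inner_self_eq_norm_sq, hnorm]; norm_num
      rw [← this, PiLp.inner_apply]
      refine Finset.sum_congr rfl fun j _ => ?_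
      simp [RCLike.inner_apply, sq]
    rw [Finset.sum_congr rfl fun t _ => this t]
    simp [hVbot]
    push_cast [Nat.cast_sub hV]
    ring
  -- rows inside V contribute zero
  have hzero : ∀ i : Fin n, rowE W i ∈ V → ∑ t, (inner ℝ (rowE W i) (w t) : ℝ) ^ 2 = 0 := by
    intro i hi
    refine Finset.sum_eq_zero fun t _ => ?_
    have h0 : (inner ℝ (rowE W i) (w t) : ℝ) = 0 :=
      (Submodule.mem_orthogonal V (w t)).1 (hwmem t) (rowE W i) hi
    rw [h0]; norm_num
  have hbessel : ∀ i : Fin n, ∑ t, (inner ℝ (rowE W i) (w t) : ℝ) ^ 2 ≤ μ * r / n := by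
    intro i
    have h1 : ∑ t, (inner ℝ (rowE W i) (w t) : ℝ) ^ 2 ≤ ‖rowE W i‖ ^ 2 := by
      have := hwon.sum_inner_products_le (s := (univ : Finset (Fin (finrank ℝ ↥Vᗮ))))
        (rowE W i)
      refine le_trans (le_of_eq ?_) this
      refine Finset.sum_congr rfl fun t _ => ?_
      rw [real_inner_comm, Real.norm_eq_abs, sq_abs]
    have h2 : ‖rowE W i‖ ^ 2 = ∑ j, W i j ^ 2 := by
      rw [EuclideanSpace.norm_eq, Real.sq_sqrt (by positivity)]
      refine Finset.sum_congr rfl fun j _ => ?_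
      rw [show (rowE W i) j = W i j from rfl, Real.norm_eq_abs, sq_abs]
    exact h1.trans (h2.le.trans (hrow i))
  have hsplit : ∑ i : Fin n, ∑ t, (inner ℝ (rowE W i) (w t) : ℝ) ^ 2
      = ∑ i ∈ univ.filter (fun i : Fin n => rowE W i ∉ V),
          ∑ t, (inner ℝ (rowE W i) (w t) : ℝ) ^ 2 := by
    rw [← Finset.sum_filter_add_sum_filter_not univ (fun i => rowE W i ∉ V)]
    have : ∑ i ∈ univ.filter (fun i : Fin n => ¬ rowE W i ∉ V),
        ∑ t, (inner ℝ (rowE W i) (w t) : ℝ) ^ 2 = 0 := by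
      refine Finset.sum_eq_zero fun i hi => ?_
      exact hzero i (not_not.1 (Finset.mem_filter.1 hi).2)
    rw [this, add_zero]
  calc ((r : ℝ) - finrank ℝ V) = ∑ i ∈ univ.filter (fun i : Fin n => rowE W i ∉ V),
          ∑ t, (inner ℝ (rowE W i) (w t) : ℝ) ^ 2 := by rw [← hsplit, htotal]
    _ ≤ ∑ _i ∈ univ.filter (fun i : Fin n => rowE W i ∉ V), (μ * r / n) :=
        Finset.sum_le_sum fun i _ => hbessel i
    _ = ((univ.filter (fun i : Fin n => rowE W i ∉ V)).card : ℝ) * (μ * r / n) := by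
        rw [Finset.sum_const, nsmul_eq_mul]


noncomputable def cfun (r s : ℕ) : ℝ :=
  ∏ k ∈ Finset.range (r - s), ((2 * (k + 1) : ℝ) / (2 * (k + 1) - 1))

lemma cfun_factor_ge_one (k : ℕ) : 1 ≤ ((2 * (k + 1) : ℝ) / (2 * (k + 1) - 1)) := by
  have hk : (0:ℝ) ≤ (k:ℝ) := Nat.cast_nonneg k
  rw [le_div_iff₀ (by linarith)]
  linarith

lemma cfun_one_le (r s : ℕ) : 1 ≤ cfun r s := by
  unfold cfun
  calc (1:ℝ) = ∏ _k ∈ Finset.range (r - s), 1 := by simp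
    _ ≤ _ := Finset.prod_le_prod (by norm_num) (fun k _ => cfun_factor_ge_one k)

lemma cfun_pos (r s : ℕ) : 0 < cfun r s := lt_of_lt_of_le one_pos (cfun_one_le r s)

lemma cfun_anti {r s s' : ℕ} (h : s ≤ s') : cfun r s' ≤ cfun r s := by
  unfold cfun
  have hmn : r - s' ≤ r - s := by omega
  rw [← Finset.prod_range_mul_prod_Ico _ hmn]
  have h1 : (1:ℝ) ≤ ∏ k ∈ Finset.Ico (r - s') (r - s), ((2 * (k + 1) : ℝ) / (2 * (k + 1) - 1)) := by
    calc (1:ℝ) = ∏ _k ∈ Finset.Ico (r - s') (r - s), 1 := by simp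
      _ ≤ _ := Finset.prod_le_prod (by norm_num) (fun k _ => cfun_factor_ge_one k)
  have h2 : (1:ℝ) ≤ ∏ k ∈ Finset.range (r - s'), ((2 * (k + 1) : ℝ) / (2 * (k + 1) - 1)) := by
    calc (1:ℝ) = ∏ _k ∈ Finset.range (r - s'), 1 := by simp
      _ ≤ _ := Finset.prod_le_prod (by norm_num) (fun k _ => cfun_factor_ge_one k)
  nlinarith

lemma cfun_pred (r s : ℕ) (h : s < r) :
    cfun r s = cfun r (s + 1) * ((2 * (r - s) : ℝ) / (2 * (r - s) - 1)) := by
  unfold cfun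
  have h1 : r - s = (r - (s+1)) + 1 := by omega
  rw [h1, Finset.prod_range_succ]
  congr 2 <;> · push_cast [Nat.cast_sub (by omega : s + 1 ≤ r)]; ring

lemma cfun_last (r : ℕ) (h : 0 < r) : cfun r (r - 1) = 2 := by
  unfold cfun
  have : r - (r - 1) = 1 := by omega
  rw [this]
  norm_num

/-- the weight function -/
noncomputable def wt (r : ℕ) (W : Matrix (Fin n) (Fin r) ℝ) (I : Finset (Fin n)) : ℝ :=
  if dSpan W I < r then cfun r (dSpan W I) else 0

lemma wt_nonneg (r : ℕ) (W : Matrix (Fin n) (Fin r) ℝ) (I : Finset (Fin n)) :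
    0 ≤ wt r W I := by
  unfold wt; split
  · exact (cfun_pos _ _).le
  · exact le_refl _

lemma wt_le (r : ℕ) (W : Matrix (Fin n) (Fin r) ℝ) (I : Finset (Fin n)) {s : ℕ}
    (h : s ≤ dSpan W I) :
    wt r W I ≤ (if s < r then cfun r s else 0) := by
  unfold wt
  by_cases h1 : dSpan W I < r
  · rw [if_pos h1, if_pos (lt_of_le_of_lt h h1)]
    exact cfun_anti h
  · rw [if_neg h1]
    split
    · exact (cfun_pos _ _).le
    · exact le_refl _


lemma key_arith1 (μ rr d c1 : ℝ) (hμ : 1 ≤ μ) (hrr : 1 ≤ rr) (hd : 1 ≤ d) :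
    (1 - d / (μ * rr)) * (c1 * (2 * d / (2 * d - 1))) + (d / (μ * rr)) * c1
      = (1 - 1 / (2 * μ * rr)) * (c1 * (2 * d / (2 * d - 1))) := by
  have h2d : (2 * d - 1) ≠ 0 := by linarith
  have hμ0 : μ ≠ 0 := by linarith
  have hrr0 : rr ≠ 0 := by linarith
  field_simp
  have h2d' : -1 + d * 2 ≠ 0 := by intro h; apply h2d; linarith
  linear_combination (-c1) * mul_inv_cancel₀ h2d'

lemma key_arith2 (μ rr cs : ℝ) (hμr : 0 < μ * rr) (hcs : 0 ≤ cs) :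
    (1 - 1 / (μ * rr)) * cs + (1 / (μ * rr)) * 0
      ≤ (1 - 1 / (2 * μ * rr)) * cs := by
  have h1 : 1 / (2 * μ * rr) ≤ 1 / (μ * rr) := by
    apply one_div_le_one_div_of_le hμr
    linarith
  nlinarith

lemma per_arith (μ rr ss nn kk t out S cs cw' : ℝ)
    (hμ : 1 ≤ μ) (hrr : 1 ≤ rr) (hss : 0 ≤ ss) (hs1 : ss + 1 ≤ rr)
    (hkk : 0 ≤ kk) (hkn : kk ≤ nn)
    (hcs : 0 < cs) (hcw0 : 0 ≤ cw') (hcwle : cw' ≤ cs)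
    (hS : S ≤ t * cs + ((nn - kk) - t) * cw')
    (ht : t = nn - out - kk)
    (hout : (rr - ss) * nn / (μ * rr) ≤ out)
    (hkey : (1 - (rr - ss) / (μ * rr)) * cs + ((rr - ss) / (μ * rr)) * cw'
        ≤ (1 - 1 / (2 * μ * rr)) * cs) :
    S ≤ (1 - 1 / (2 * μ * rr)) * (nn - kk) * cs := by
  have hμr : (0:ℝ) < μ * rr := by nlinarith
  have hd1 : 1 ≤ rr - ss := by linarith
  have hq0 : 0 ≤ 1 - (rr - ss) / (μ * rr) := by
    have hdr : rr - ss ≤ μ * rr := by nlinarith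
    have := div_le_one_of_le₀ hdr hμr.le
    linarith
  have hM0 : 0 ≤ nn - kk := by linarith
  have htq : t ≤ (1 - (rr - ss) / (μ * rr)) * (nn - kk) := by
    have h1 : (rr - ss) * (nn - kk) / (μ * rr) ≤ (rr - ss) * nn / (μ * rr) :=
      (div_le_div_iff_of_pos_right hμr).2 (by nlinarith)
    have h2 : t ≤ (nn - kk) - (rr - ss) * nn / (μ * rr) := by
      rw [ht]; linarith
    have h3 : (1 - (rr - ss) / (μ * rr)) * (nn - kk)
        = (nn - kk) - (rr - ss) * (nn - kk) / (μ * rr) := by ring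
    linarith
  have hstep : t * cs + ((nn - kk) - t) * cw'
      ≤ (nn - kk) * ((1 - (rr - ss) / (μ * rr)) * cs + ((rr - ss) / (μ * rr)) * cw') := by
    have e3 : t * (cs - cw') ≤ ((1 - (rr - ss) / (μ * rr)) * (nn - kk)) * (cs - cw') :=
      mul_le_mul_of_nonneg_right htq (by linarith)
    nlinarith [e3]
  have hfin : (nn - kk) * ((1 - (rr - ss) / (μ * rr)) * cs + ((rr - ss) / (μ * rr)) * cw')
      ≤ (nn - kk) * ((1 - 1 / (2 * μ * rr)) * cs) :=
    mul_le_mul_of_nonneg_left hkey hM0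
  calc S ≤ t * cs + ((nn - kk) - t) * cw' := hS
    _ ≤ (nn - kk) * ((1 - (rr - ss) / (μ * rr)) * cs + ((rr - ss) / (μ * rr)) * cw') := hstep
    _ ≤ (nn - kk) * ((1 - 1 / (2 * μ * rr)) * cs) := hfin
    _ = (1 - 1 / (2 * μ * rr)) * (nn - kk) * cs := by ring

lemma per_subset (hn : 0 < n) (hr : 0 < r)
    (W : Matrix (Fin n) (Fin r) ℝ) (hW : Wᵀ * W = 1)
    (μ : ℝ) (hμ : 1 ≤ μ) (hrow : ∀ i, ∑ j, W i j ^ 2 ≤ μ * r / n)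
    (I : Finset (Fin n)) :
    ∑ i ∈ Iᶜ, wt r W (insert i I) ≤
      (1 - 1 / (2 * μ * r)) * ((n : ℝ) - I.card) * wt r W I := by
  have hr1 : (1:ℝ) ≤ r := by exact_mod_cast hr
  have hμr : (0:ℝ) < μ * r := by nlinarith
  have hlam0 : (0:ℝ) ≤ 1 - 1 / (2 * μ * r) := by
    have h2 : (2:ℝ) ≤ 2 * μ * r := by nlinarith
    have : 1 / (2 * μ * r) ≤ 1 / 2 := by
      apply one_div_le_one_div_of_le <;> linarith
    linarith
  have hcard : (I.card : ℝ) ≤ n := by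
    have := Finset.card_le_univ I
    simp only [Finset.card_univ, Fintype.card_fin] at this
    exact_mod_cast this
  have hM0 : (0:ℝ) ≤ (n : ℝ) - I.card := by linarith
  by_cases hs : dSpan W I < r
  swap
  · -- wt I = 0 and all inserts are ≥ r as well
    have hwI : wt r W I = 0 := by unfold wt; rw [if_neg hs]
    have : ∀ i ∈ Iᶜ, wt r W (insert i I) = 0 := by
      intro i _
      unfold wt
      rw [if_neg]
      have := dSpan_insert_le W I i
      omega
    rw [Finset.sum_eq_zero this, hwI, mul_zero]
  · obtain ⟨s, hsdef⟩ : ∃ s, dSpan W I = s := ⟨_, rfl⟩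
    rw [hsdef] at hs
    set Vs := Submodule.span ℝ (rowE W '' (I : Set (Fin n))) with hVs
    have hwI : wt r W I = cfun r s := by unfold wt; rw [hsdef, if_pos hs]
    set cs := cfun r s with hcs
    set cw' : ℝ := if s + 1 < r then cfun r (s + 1) else 0 with hcw'
    have hcs0 : 0 < cs := cfun_pos _ _
    have hcw'0 : 0 ≤ cw' := by
      rw [hcw']
      split
      · exact (cfun_pos _ _).le
      · exact le_refl _
    have hcw'le : cw' ≤ cs := by
      rw [hcw']; split
      · exact cfun_anti (by omega)
      · exact hcs0.le
    set stay := Iᶜ.filter (fun i => rowE W i ∈ Vs) with hstay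
    -- value on stay
    have hstayval : ∀ i ∈ stay, wt r W (insert i I) = cs := by
      intro i hi
      have hmem : rowE W i ∈ Vs := (Finset.mem_filter.1 hi).2
      have heq : dSpan W (insert i I) = s := by
        rw [← hsdef]
        exact (dSpan_insert_eq_iff W I i).2 hmem
      unfold wt
      rw [heq, if_pos hs]
    -- value on rise
    have hriseval : ∀ i ∈ Iᶜ \ stay, wt r W (insert i I) ≤ cw' := by
      intro i hi
      rcases Finset.mem_sdiff.1 hi with ⟨hic, hnotstay⟩
      have hnotmem : rowE W i ∉ Vs := by
        intro hmem
        exact hnotstay (Finset.mem_filter.2 ⟨hic, hmem⟩)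
      have hge : s + 1 ≤ dSpan W (insert i I) := by
        have h1 := dSpan_insert_le W I i
        have h2 : dSpan W (insert i I) ≠ s := by
          intro h
          exact hnotmem ((dSpan_insert_eq_iff W I i).1 (by rw [h, hsdef]))
        omega
      have := wt_le r W (insert i I) hge
      rwa [← hcw'] at this
    -- split the sum
    have hsplit : ∑ i ∈ Iᶜ, wt r W (insert i I)
        ≤ (stay.card : ℝ) * cs + ((Iᶜ.card : ℝ) - stay.card) * cw' := by
      rw [← Finset.sum_filter_add_sum_filter_not Iᶜ (fun i => rowE W i ∈ Vs)]
      have h1 : ∑ i ∈ stay, wt r W (insert i I) = (stay.card : ℝ) * cs := by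
        rw [Finset.sum_congr rfl hstayval, Finset.sum_const, nsmul_eq_mul]
      have h2 : ∑ i ∈ Iᶜ.filter (fun i => ¬ rowE W i ∈ Vs), wt r W (insert i I)
          ≤ ((Iᶜ.card : ℝ) - stay.card) * cw' := by
        have hsub : Iᶜ.filter (fun i => ¬ rowE W i ∈ Vs) = Iᶜ \ stay := by
          ext i
          simp only [Finset.mem_filter, Finset.mem_sdiff, hstay, not_and]
          tauto
        rw [hsub]
        have hcd : ((Iᶜ \ stay).card : ℝ) = (Iᶜ.card : ℝ) - stay.card := by
          rw [Finset.card_sdiff_of_subset (Finset.filter_subset _ _)]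
          have := Finset.card_filter_le Iᶜ (fun i => rowE W i ∈ Vs)
          push_cast [Nat.cast_sub this]
          rfl
        calc ∑ i ∈ Iᶜ \ stay, wt r W (insert i I) ≤ ∑ _i ∈ Iᶜ \ stay, cw' :=
              Finset.sum_le_sum hriseval
          _ = ((Iᶜ \ stay).card : ℝ) * cw' := by rw [Finset.sum_const, nsmul_eq_mul]
          _ = ((Iᶜ.card : ℝ) - stay.card) * cw' := by rw [hcd]
      have := add_le_add h1.le h2
      linarith [this]
    -- counting: stay.card is small
    have hIsub : I ⊆ Finset.univ.filter (fun i => rowE W i ∈ Vs) := by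
      intro i hi
      refine Finset.mem_filter.2 ⟨Finset.mem_univ _, ?_⟩
      exact Submodule.subset_span (Set.mem_image_of_mem _ (by exact_mod_cast hi))
    have hstayeq : stay = Finset.univ.filter (fun i => rowE W i ∈ Vs) \ I := by
      ext i
      simp only [hstay, Finset.mem_filter, Finset.mem_sdiff, Finset.mem_compl,
        Finset.mem_univ, true_and]
      tauto
    have hstaycard : (stay.card : ℝ)
        = ((Finset.univ.filter (fun i => rowE W i ∈ Vs)).card : ℝ) - I.card := by
      rw [hstayeq, Finset.card_sdiff_of_subset hIsub]
      push_cast [Nat.cast_sub (Finset.card_le_card hIsub)]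
      rfl
    have hinout : ((Finset.univ.filter (fun i => rowE W i ∈ Vs)).card : ℝ)
        = (n : ℝ) - ((Finset.univ.filter (fun i => rowE W i ∉ Vs)).card : ℝ) := by
      have := Finset.card_filter_add_card_filter_not
        (s := (Finset.univ : Finset (Fin n))) (p := fun i => rowE W i ∈ Vs)
      simp only [Finset.card_univ, Fintype.card_fin] at this
      have h2 : ((Finset.univ.filter (fun i => rowE W i ∈ Vs)).card : ℝ)
          + ((Finset.univ.filter (fun i => ¬ rowE W i ∈ Vs)).card : ℝ) = n := by
        exact_mod_cast congrArg (Nat.cast : ℕ → ℝ) this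
      linarith [h2]
    have hfinrank : finrank ℝ Vs ≤ r := dSpan_le W I
    have hout := count_outside hn W hW μ (by linarith) hrow Vs hfinrank
    have hVsrank : finrank ℝ Vs = s := hsdef
    rw [hVsrank] at hout
    -- outside count lower bound
    have houtlb : ((r : ℝ) - s) * n / (μ * r)
        ≤ ((Finset.univ.filter (fun i => rowE W i ∉ Vs)).card : ℝ) := by
      have hn0 : (0:ℝ) < n := by exact_mod_cast hn
      rw [div_le_iff₀ hμr]
      have h2 : ((univ.filter (fun i : Fin n => rowE W i ∉ Vs)).card : ℝ) * (μ * r / n) * n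
          = ((univ.filter (fun i : Fin n => rowE W i ∉ Vs)).card : ℝ) * (μ * r) := by
        field_simp
      nlinarith [hout]
    -- final arithmetic
    have hcompl : ((Iᶜ.card : ℝ)) = (n : ℝ) - I.card := by
      have h1 : Iᶜ.card = n - I.card := by
        rw [Finset.card_compl, Fintype.card_fin]
      rw [h1, Nat.cast_sub (by simpa using Finset.card_le_univ I)]
    rw [hcompl] at hsplit
    have hs1r : (s:ℝ) + 1 ≤ (r:ℝ) := by exact_mod_cast hs
    have htt : (stay.card : ℝ) = (n:ℝ)
        - ((Finset.univ.filter (fun i => rowE W i ∉ Vs)).card : ℝ) - I.card := by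
      rw [hstaycard, hinout]
    have hkey : (1 - ((r:ℝ) - s) / (μ * r)) * cs + (((r:ℝ) - s) / (μ * r)) * cw'
        ≤ (1 - 1 / (2 * μ * r)) * cs := by
      by_cases hs1 : s + 1 < r
      · have hcwv : cw' = cfun r (s + 1) := by rw [hcw', if_pos hs1]
        have hcsv : cs = cfun r (s + 1) * (2 * ((r:ℝ) - s) / (2 * ((r:ℝ) - s) - 1)) := by
          rw [hcs, cfun_pred r s (by omega)]
        rw [hcwv, hcsv]
        exact (key_arith1 μ r ((r:ℝ) - s) (cfun r (s + 1)) hμ hr1 (by linarith)).le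
      · have hcwv : cw' = 0 := by rw [hcw', if_neg hs1]
        have hds : (r:ℝ) - s = 1 := by
          have : r = s + 1 := by omega
          rw [this]; push_cast; ring
        rw [hcwv, hds]
        have := key_arith2 μ r cs hμr hcs0.le
        linarith [this]
    rw [hwI]
    exact per_arith μ r s n (I.card) (stay.card)
      ((Finset.univ.filter (fun i => rowE W i ∉ Vs)).card : ℝ)
      (∑ i ∈ Iᶜ, wt r W (insert i I)) cs cw'
      hμ hr1 (Nat.cast_nonneg s) hs1r (Nat.cast_nonneg _) hcard
      hcs0 hcw'0 hcw'le hsplit htt houtlb hkey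

lemma dSpan_empty (W : Matrix (Fin n) (Fin r) ℝ) : dSpan W (∅ : Finset (Fin n)) = 0 := by
  have h : (rowE W '' ((∅ : Finset (Fin n)) : Set (Fin n))) = (∅ : Set _) := by simp
  unfold dSpan
  rw [h, Submodule.span_empty]
  exact finrank_bot ℝ (EuclideanSpace ℝ (Fin r))

lemma sum_powersetCard_succ (k : ℕ) (f : Finset (Fin n) → ℝ) :
    ∑ I ∈ Finset.powersetCard (k + 1) (Finset.univ : Finset (Fin n)), ((k : ℝ) + 1) * f I
      = ∑ I ∈ Finset.powersetCard k (Finset.univ : Finset (Fin n)), ∑ i ∈ Iᶜ, f (insert i I) := by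
  have hL : ∀ I ∈ Finset.powersetCard (k + 1) (Finset.univ : Finset (Fin n)),
      ((k : ℝ) + 1) * f I = ∑ _i ∈ I, f I := by
    intro I hI
    rw [Finset.sum_const, nsmul_eq_mul, (Finset.mem_powersetCard.1 hI).2]
    push_cast
    ring
  rw [Finset.sum_congr rfl hL, Finset.sum_sigma', Finset.sum_sigma']
  refine Finset.sum_nbij' (fun p => ⟨p.1.erase p.2, p.2⟩) (fun p => ⟨insert p.2 p.1, p.2⟩)
    ?_ ?_ ?_ ?_ ?_
  · rintro ⟨I, x⟩ hp
    rw [Finset.mem_sigma] at hp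
    obtain ⟨hI, hx⟩ := hp
    rw [Finset.mem_powersetCard] at hI
    refine Finset.mem_sigma.2 ⟨Finset.mem_powersetCard.2 ⟨Finset.subset_univ _, ?_⟩, ?_⟩
    · rw [Finset.card_erase_of_mem hx]
      omega
    · simp
  · rintro ⟨I, x⟩ hp
    rw [Finset.mem_sigma] at hp
    obtain ⟨hI, hx⟩ := hp
    rw [Finset.mem_powersetCard] at hI
    have hxI : x ∉ I := by simpa using hx
    refine Finset.mem_sigma.2 ⟨Finset.mem_powersetCard.2 ⟨Finset.subset_univ _, ?_⟩, ?_⟩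
    · rw [Finset.card_insert_of_notMem hxI, hI.2]
    · exact Finset.mem_insert_self _ _
  · rintro ⟨I, x⟩ hp
    rw [Finset.mem_sigma] at hp
    simp [Finset.insert_erase hp.2]
  · rintro ⟨I, x⟩ hp
    rw [Finset.mem_sigma] at hp
    have hxI : x ∉ I := by simpa using hp.2
    simp [Finset.erase_insert hxI]
  · rintro ⟨I, x⟩ hp
    rw [Finset.mem_sigma] at hp
    simp [Finset.insert_erase hp.2]

lemma chain (hn : 0 < n) (hr : 0 < r)
    (W : Matrix (Fin n) (Fin r) ℝ) (hW : Wᵀ * W = 1)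
    (μ : ℝ) (hμ : 1 ≤ μ) (hrow : ∀ i, ∑ j, W i j ^ 2 ≤ μ * r / n) :
    ∀ m : ℕ, ∑ I ∈ Finset.powersetCard m (Finset.univ : Finset (Fin n)), wt r W I
      ≤ (1 - 1 / (2 * μ * r)) ^ m * cfun r 0 * (n.choose m) := by
  have hr1 : (1:ℝ) ≤ r := by exact_mod_cast hr
  have hμr : (0:ℝ) < μ * r := by nlinarith
  have hlam0 : (0:ℝ) ≤ 1 - 1 / (2 * μ * r) := by
    have h2 : (2:ℝ) ≤ 2 * μ * r := by nlinarith
    have : 1 / (2 * μ * r) ≤ 1 / 2 := by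
      apply one_div_le_one_div_of_le <;> linarith
    linarith
  intro m
  induction m with
  | zero =>
    rw [Finset.powersetCard_zero, Finset.sum_singleton]
    have : wt r W (∅ : Finset (Fin n)) = cfun r 0 := by
      unfold wt
      rw [dSpan_empty, if_pos hr]
    rw [this]
    simp
  | succ k ih =>
    have hkpos : (0:ℝ) < (k:ℝ) + 1 := by positivity
    have hsum_nonneg : (0:ℝ) ≤ ∑ I ∈ Finset.powersetCard k (Finset.univ : Finset (Fin n)),
        wt r W I := Finset.sum_nonneg fun I _ => wt_nonneg r W I
    have hkey : ((k:ℝ) + 1) * ∑ I ∈ Finset.powersetCard (k+1) (Finset.univ : Finset (Fin n)),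
        wt r W I
        ≤ ((1 - 1 / (2 * μ * r)) * ((n:ℝ) - k)) *
          ((1 - 1 / (2 * μ * r)) ^ k * cfun r 0 * (n.choose k)) := by
      rw [Finset.mul_sum, sum_powersetCard_succ k (wt r W)]
      calc ∑ I ∈ Finset.powersetCard k (Finset.univ : Finset (Fin n)),
            ∑ i ∈ Iᶜ, wt r W (insert i I)
          ≤ ∑ I ∈ Finset.powersetCard k (Finset.univ : Finset (Fin n)),
            (1 - 1 / (2 * μ * r)) * ((n:ℝ) - k) * wt r W I := by
            refine Finset.sum_le_sum fun I hI => ?_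
            have hcard : I.card = k := (Finset.mem_powersetCard.1 hI).2
            have := per_subset hn hr W hW μ hμ hrow I
            rwa [hcard] at this
        _ = ((1 - 1 / (2 * μ * r)) * ((n:ℝ) - k)) *
            ∑ I ∈ Finset.powersetCard k (Finset.univ : Finset (Fin n)), wt r W I := by
            rw [Finset.mul_sum]
        _ ≤ ((1 - 1 / (2 * μ * r)) * ((n:ℝ) - k)) *
            ((1 - 1 / (2 * μ * r)) ^ k * cfun r 0 * (n.choose k)) := by
            by_cases hkn : k ≤ n
            · refine mul_le_mul_of_nonneg_left ih ?_
              have : (k:ℝ) ≤ n := by exact_mod_cast hkn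
              have h0 : (0:ℝ) ≤ (n:ℝ) - k := by linarith
              positivity
            · have h1 : Finset.powersetCard k (Finset.univ : Finset (Fin n)) = ∅ := by
                rw [Finset.powersetCard_eq_empty]
                simpa using by omega
              rw [h1] at hsum_nonneg ⊢
              have h2 : (n.choose k : ℝ) = 0 := by
                rw [Nat.choose_eq_zero_of_lt (by omega)]
                norm_num
              rw [Finset.sum_empty, mul_zero]
              rw [h2]
              ring_nf
              positivity
    by_cases hkn : k + 1 ≤ n
    · have hcast : ((n:ℝ) - k) * (n.choose k) = ((k:ℝ) + 1) * (n.choose (k+1)) := by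
        have hnat := Nat.choose_succ_right_eq n k
        have h1 : ((n.choose (k+1) : ℝ)) * ((k:ℝ)+1) = (n.choose k : ℝ) * ((n - k : ℕ) : ℝ) := by
          exact_mod_cast congrArg (Nat.cast : ℕ → ℝ) hnat
        rw [Nat.cast_sub (by omega)] at h1
        linarith [h1]
      have hfinal : ((k:ℝ) + 1) * ∑ I ∈ Finset.powersetCard (k+1)
          (Finset.univ : Finset (Fin n)), wt r W I
          ≤ ((k:ℝ) + 1) * ((1 - 1 / (2 * μ * r)) ^ (k+1) * cfun r 0 * (n.choose (k+1))) := by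
        refine hkey.trans (le_of_eq ?_)
        rw [pow_succ]
        linear_combination ((1 - 1 / (2 * μ * (r:ℝ))) ^ k * (1 - 1 / (2 * μ * (r:ℝ))) *
          cfun r 0) * hcast
      exact le_of_mul_le_mul_left (by linarith [hfinal]) hkpos
    · have h1 : Finset.powersetCard (k+1) (Finset.univ : Finset (Fin n)) = ∅ := by
        rw [Finset.powersetCard_eq_empty]
        simpa using by omega
      rw [h1, Finset.sum_empty]
      exact mul_nonneg (mul_nonneg (pow_nonneg hlam0 _) (cfun_pos r 0).le) (Nat.cast_nonneg _)

lemma cfun_mul_centralBinom (r : ℕ) :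
    cfun r 0 * (Nat.centralBinom r : ℝ) = 4 ^ r := by
  induction r with
  | zero => simp [cfun, Nat.centralBinom]
  | succ k ih =>
    have hstep : cfun (k+1) 0 = cfun k 0 * ((2 * (k + 1) : ℝ) / (2 * (k + 1) - 1)) := by
      unfold cfun
      simp only [Nat.sub_zero]
      rw [Finset.prod_range_succ]
    have hcb : ((k+1 : ℕ) : ℝ) * (Nat.centralBinom (k+1) : ℝ)
        = 2 * (2 * k + 1) * (Nat.centralBinom k : ℝ) := by
      exact_mod_cast congrArg (Nat.cast : ℕ → ℝ) (Nat.succ_mul_centralBinom_succ k)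
    have hk1 : ((k:ℝ) + 1) ≠ 0 := by positivity
    have h2k1 : (2 * ((k:ℝ) + 1) - 1) ≠ 0 := by
      have : (0:ℝ) ≤ k := Nat.cast_nonneg k
      intro h; nlinarith
    have hcb' : (Nat.centralBinom (k+1) : ℝ)
        = 2 * (2 * k + 1) * (Nat.centralBinom k : ℝ) / ((k:ℝ) + 1) := by
      field_simp
      push_cast at hcb
      linarith [hcb]
    rw [hstep, hcb', pow_succ]
    rw [← ih]
    have he : (2 * ((k:ℝ) + 1) - 1) = 2 * k + 1 := by ring
    field_simp [he]
    ring
  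
lemma cfun_zero_le (r : ℕ) (hr : 0 < r) : cfun r 0 ≤ 2 * r := by
  have hid := cfun_mul_centralBinom r
  have hb := Nat.four_pow_le_two_mul_self_mul_centralBinom r hr
  have hbR : (4:ℝ) ^ r ≤ 2 * r * (Nat.centralBinom r : ℝ) := by
    exact_mod_cast Nat.cast_le.2 hb
  have hcb0 : (0:ℝ) < (Nat.centralBinom r : ℝ) := by
    exact_mod_cast Nat.centralBinom_pos r
  have h1 : cfun r 0 * (Nat.centralBinom r : ℝ) ≤ 2 * r * (Nat.centralBinom r : ℝ) := by
    rw [hid]; exact hbR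
  exact le_of_mul_le_mul_right h1 hcb0

lemma numeric (r : ℕ) (hr : 0 < r) (μ δ : ℝ) (hμ : 1 ≤ μ) (hδ0 : 0 < δ) (hδ1 : δ < 1)
    (m : ℕ) (hm : 3 * r * μ * Real.log (2 * r / δ) ≤ (m : ℝ))
    (c0 : ℝ) (hc00 : 0 ≤ c0) (hc0 : c0 ≤ 2 * r) :
    (1 - 1 / (2 * μ * r)) ^ m * c0 ≤ 2 * δ := by
  have hr1 : (1:ℝ) ≤ r := by exact_mod_cast hr
  have hμr : (0:ℝ) < μ * r := by nlinarith
  have h2μr : (0:ℝ) < 2 * μ * r := by nlinarith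
  have hlam0 : (0:ℝ) ≤ 1 - 1 / (2 * μ * r) := by
    have h2 : (2:ℝ) ≤ 2 * μ * r := by nlinarith
    have : 1 / (2 * μ * r) ≤ 1 / 2 := by
      apply one_div_le_one_div_of_le <;> linarith
    linarith
  set x := 2 * (r:ℝ) / δ with hx
  have hx2 : (2:ℝ) ≤ x := by
    rw [hx, le_div_iff₀ hδ0]
    nlinarith
  have hx0 : (0:ℝ) < x := by linarith
  have hL0 : 0 < Real.log x := Real.log_pos (by linarith)
  -- step 1 : lam ^ m ≤ exp (-(m / (2 μ r)))
  have hstep1 : (1 - 1 / (2 * μ * r)) ^ m ≤ Real.exp (-((m:ℝ) / (2 * μ * r))) := by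
    have h1 : (1 - 1 / (2 * μ * r)) ≤ Real.exp (-(1 / (2 * μ * r))) := by
      have := Real.add_one_le_exp (-(1 / (2 * μ * r)))
      linarith
    calc (1 - 1 / (2 * μ * r)) ^ m ≤ (Real.exp (-(1 / (2 * μ * r)))) ^ m :=
          pow_le_pow_left₀ hlam0 h1 m
      _ = Real.exp ((m:ℝ) * (-(1 / (2 * μ * r)))) := by rw [← Real.exp_nat_mul]
      _ = Real.exp (-((m:ℝ) / (2 * μ * r))) := by congr 1; ring
  -- step 2 : -(m/(2μr)) ≤ -(3/2) log x
  have hstep2 : -((m:ℝ) / (2 * μ * r)) ≤ -(3/2 * Real.log x) := by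
    have h1 : 3 * r * μ * Real.log x ≤ (m:ℝ) := hm
    have h2 : 3/2 * Real.log x = (3 * r * μ * Real.log x) / (2 * μ * r) := by
      field_simp
    have h3 : (3 * r * μ * Real.log x) / (2 * μ * r) ≤ (m:ℝ) / (2 * μ * r) :=
      (div_le_div_iff_of_pos_right h2μr).2 h1
    linarith [h2 ▸ h3]
  -- step 3 : exp (-(3/2) log x) = x ^ (-(3/2))
  have hstep3 : Real.exp (-(3/2 * Real.log x)) = x ^ ((-(3/2)) : ℝ) := by
    rw [Real.rpow_def_of_pos hx0]
    congr 1
    ring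
  -- step 4 : x ^ (-(3/2)) ≤ (1/x) * 1
  have hxinv : x ^ ((-(1:ℝ))) = 1 / x := by
    rw [Real.rpow_neg_one]
    exact (one_div x).symm
  have hstep4 : x ^ ((-(3/2)) : ℝ) ≤ 1 / x := by
    have hsplit : x ^ ((-(3/2)) : ℝ) = x ^ ((-(1:ℝ))) * x ^ ((-(1/2)) : ℝ) := by
      rw [← Real.rpow_add hx0]
      norm_num
    have hhalf : x ^ ((-(1/2)) : ℝ) ≤ 1 :=
      Real.rpow_le_one_of_one_le_of_nonpos (by linarith) (by norm_num)
    have hpos : (0:ℝ) < x ^ ((-(1:ℝ))) := Real.rpow_pos_of_pos hx0 _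
    calc x ^ ((-(3/2)) : ℝ) = x ^ ((-(1:ℝ))) * x ^ ((-(1/2)) : ℝ) := hsplit
      _ ≤ x ^ ((-(1:ℝ))) * 1 := mul_le_mul_of_nonneg_left hhalf hpos.le
      _ = 1 / x := by rw [mul_one, hxinv]
  -- combine
  have hfinal : (1 - 1 / (2 * μ * r)) ^ m ≤ 1 / x := by
    calc (1 - 1 / (2 * μ * r)) ^ m ≤ Real.exp (-((m:ℝ) / (2 * μ * r))) := hstep1
      _ ≤ Real.exp (-(3/2 * Real.log x)) := Real.exp_le_exp.2 hstep2
      _ = x ^ ((-(3/2)) : ℝ) := hstep3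
      _ ≤ 1 / x := hstep4
  have hxval : 1 / x = δ / (2 * r) := by
    rw [hx]
    rw [one_div_div]
  have hend : (1 - 1 / (2 * μ * r)) ^ m * c0 ≤ (δ / (2 * r)) * (2 * r) := by
    have h0 : (0:ℝ) ≤ (1 - 1 / (2 * μ * r)) ^ m := pow_nonneg hlam0 m
    have h1 : (1 - 1 / (2 * μ * r)) ^ m * c0 ≤ (1/x) * (2 * r) := by
      apply mul_le_mul hfinal hc0 hc00 ?_
      rw [hxval]
      positivity
    rwa [hxval] at h1
  have : (δ / (2 * r)) * (2 * r) = δ := by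
    field_simp
  linarith [this ▸ hend]

/-- Core counting lemma: the number of size-`m` subsets whose row span is deficient is at
most `δ` times the total number. -/
lemma core (hn : 0 < n) (hr : 0 < r)
    (W : Matrix (Fin n) (Fin r) ℝ) (hW : Wᵀ * W = 1)
    (μ : ℝ) (hμ : 1 ≤ μ) (hrow : ∀ i, ∑ j, W i j ^ 2 ≤ μ * r / n)
    (δ : ℝ) (hδ0 : 0 < δ) (hδ1 : δ < 1)
    (m : ℕ) (hm : 3 * r * μ * Real.log (2 * r / δ) ≤ (m : ℝ)) :
    (((Finset.powersetCard m (Finset.univ : Finset (Fin n))).filter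
        (fun I => dSpan W I ≠ r)).card : ℝ)
      ≤ δ * (n.choose m) := by
  have h2 : ∀ I ∈ (Finset.powersetCard m (Finset.univ : Finset (Fin n))).filter
      (fun I => dSpan W I ≠ r), (2:ℝ) ≤ wt r W I := by
    intro I hI
    have hd0 := (Finset.mem_filter.1 hI).2
    have hdle := dSpan_le W I
    have hd : dSpan W I < r := by omega
    unfold wt
    rw [if_pos hd]
    calc (2:ℝ) = cfun r (r - 1) := (cfun_last r hr).symm
      _ ≤ cfun r (dSpan W I) := cfun_anti (by omega)
  have hbound : 2 * (((Finset.powersetCard m (Finset.univ : Finset (Fin n))).filter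
      (fun I => dSpan W I ≠ r)).card : ℝ)
      ≤ ∑ I ∈ Finset.powersetCard m (Finset.univ : Finset (Fin n)), wt r W I := by
    calc 2 * (((Finset.powersetCard m (Finset.univ : Finset (Fin n))).filter
          (fun I => dSpan W I ≠ r)).card : ℝ)
        = ∑ _I ∈ (Finset.powersetCard m (Finset.univ : Finset (Fin n))).filter
            (fun I => dSpan W I ≠ r), (2:ℝ) := by rw [Finset.sum_const, nsmul_eq_mul]; ring
      _ ≤ ∑ I ∈ (Finset.powersetCard m (Finset.univ : Finset (Fin n))).filter
            (fun I => dSpan W I ≠ r), wt r W I := Finset.sum_le_sum h2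
      _ ≤ ∑ I ∈ Finset.powersetCard m (Finset.univ : Finset (Fin n)), wt r W I :=
          Finset.sum_le_sum_of_subset_of_nonneg (Finset.filter_subset _ _)
            (fun I _ _ => wt_nonneg r W I)
  have hchain := chain hn hr W hW μ hμ hrow m
  have hnum := numeric r hr μ δ hμ hδ0 hδ1 m hm (cfun r 0) (cfun_pos r 0).le
    (cfun_zero_le r hr)
  have hchoose : (0:ℝ) ≤ (n.choose m : ℝ) := Nat.cast_nonneg _
  have : (1 - 1 / (2 * μ * r)) ^ m * cfun r 0 * (n.choose m) ≤ 2 * δ * (n.choose m) :=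
    mul_le_mul_of_nonneg_right hnum hchoose
  linarith

lemma rank_submatrix_full {N T r : ℕ} (X : Matrix (Fin N) (Fin T) ℝ)
    (U : Matrix (Fin N) (Fin r) ℝ) (S : Matrix (Fin r) (Fin r) ℝ)
    (V : Matrix (Fin T) (Fin r) ℝ)
    (hX : X = U * S * Vᵀ) (hSd : S.IsDiag) (hSpos : ∀ i, 0 < S i i)
    (I : Finset (Fin N)) (J : Finset (Fin T))
    (hI : (U.submatrix (fun i : ↥I => (i : Fin N)) id).rank = r)
    (hJ : (V.submatrix (fun j : ↥J => (j : Fin T)) id).rank = r) :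
    (X.submatrix (fun i : ↥I => (i : Fin N)) (fun j : ↥J => (j : Fin T))).rank = r := by
  set f := fun i : ↥I => (i : Fin N) with hf
  set g := fun j : ↥J => (j : Fin T) with hg
  set A := U.submatrix f id with hA
  set B := V.submatrix g id with hB
  have hsub : X.submatrix f g = A * S * Bᵀ := by
    rw [hX, Matrix.submatrix_mul (U * S) Vᵀ f id g Function.bijective_id,
      Matrix.submatrix_mul U S f id id Function.bijective_id, Matrix.submatrix_id_id,
      ← Matrix.transpose_submatrix]
  rw [hsub]
  -- surjectivity of Bᵀ
  have hBt_surj : LinearMap.range (Bᵀ.mulVecLin) = ⊤ := by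
    apply Submodule.eq_top_of_finrank_eq
    have h1 : finrank ℝ (LinearMap.range Bᵀ.mulVecLin) = Bᵀ.rank := rfl
    rw [h1, Matrix.rank_transpose, hJ, Module.finrank_fintype_fun_eq_card,
      Fintype.card_fin]
  -- surjectivity of S
  have hS_surj : LinearMap.range (S.mulVecLin) = ⊤ := by
    rw [LinearMap.range_eq_top]
    intro y
    refine ⟨fun i => y i / S i i, ?_⟩
    ext i
    rw [Matrix.mulVecLin_apply]
    show ∑ j, S i j * (y j / S j j) = y i
    rw [Finset.sum_eq_single_of_mem i (Finset.mem_univ i)]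
    · exact mul_div_cancel₀ (y i) (hSpos i).ne'
    · intro b _ hb
      rw [hSd hb.symm, zero_mul]
  -- injectivity of A is not even needed ; rank A = r suffices
  have hcomp : (A * S * Bᵀ).mulVecLin
      = (A * S).mulVecLin.comp (Bᵀ.mulVecLin) := Matrix.mulVecLin_mul _ _
  have hcomp2 : (A * S).mulVecLin = A.mulVecLin.comp (S.mulVecLin) := Matrix.mulVecLin_mul _ _
  have hrange : LinearMap.range ((A * S * Bᵀ).mulVecLin) = LinearMap.range (A.mulVecLin) := by
    rw [hcomp, LinearMap.range_comp_of_range_eq_top _ hBt_surj, hcomp2,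
      LinearMap.range_comp_of_range_eq_top _ hS_surj]
  show finrank ℝ (LinearMap.range ((A * S * Bᵀ).mulVecLin)) = r
  rw [hrange]
  exact hI

lemma row_bound {n r : ℕ} (W : Matrix (Fin n) (Fin r) ℝ) (Bd : ℝ) (hBd : 0 ≤ Bd)
    (h : rowNorm2Inf W ≤ Real.sqrt Bd) : ∀ i, ∑ j, W i j ^ 2 ≤ Bd := by
  intro i
  have h1 : Real.sqrt (∑ j, W i j ^ 2) ≤ rowNorm2Inf W := by
    unfold rowNorm2Inf
    exact le_ciSup (f := fun i : Fin n => Real.sqrt (∑ j, W i j ^ 2))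
      (Set.finite_range _).bddAbove i
  exact (Real.sqrt_le_sqrt_iff hBd).1 (h1.trans h)

end CUR

open CUR

/-- with `I ⊆ {1,…,N}` of size `mI ≥ 3 r μ₁ ln(2r/δ)/ε²` and independently
`J ⊆ {1,…,T}` of size `mJ ≥ 3 r μ₂ ln(2r/δ)/ε²`, each uniformly random among subsets of
that size, the submatrix `X(I,J)` has rank `r` with probability at least `(1-δ)²`. -/
theorem stmt1 {N T r : ℕ} (X : Matrix (Fin N) (Fin T) ℝ)
    (hrank : X.rank = r) (hr : r < min N T)
    (U : Matrix (Fin N) (Fin r) ℝ) (S : Matrix (Fin r) (Fin r) ℝ)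
    (V : Matrix (Fin T) (Fin r) ℝ) (hsvd : IsThinSVD X r U S V)
    (μ₁ μ₂ : ℝ) (hμ₁ : 1 ≤ μ₁) (hμ₂ : 1 ≤ μ₂)
    (hU : rowNorm2Inf U ≤ Real.sqrt (μ₁ * r / N))
    (hV : rowNorm2Inf V ≤ Real.sqrt (μ₂ * r / T))
    (δ ε : ℝ) (hδ0 : 0 < δ) (hδ1 : δ < 1) (hε0 : 0 < ε) (hε1 : ε < 1)
    (mI mJ : ℕ) (hmIN : mI ≤ N) (hmJT : mJ ≤ T)
    (hmI : 3 * r * μ₁ * Real.log (2 * r / δ) / ε ^ 2 ≤ (mI : ℝ))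
    (hmJ : 3 * r * μ₂ * Real.log (2 * r / δ) / ε ^ 2 ≤ (mJ : ℝ)) :
    (1 - δ) ^ 2 ≤
      (((Finset.powersetCard mI (Finset.univ : Finset (Fin N)) ×ˢ
            Finset.powersetCard mJ (Finset.univ : Finset (Fin T))).filter
          (fun p : Finset (Fin N) × Finset (Fin T) =>
            (X.submatrix (fun i : ↥p.1 => (i : Fin N))
              (fun j : ↥p.2 => (j : Fin T))).rank = r)).card : ℝ) /
        (((Finset.powersetCard mI (Finset.univ : Finset (Fin N))).card : ℝ) *
          ((Finset.powersetCard mJ (Finset.univ : Finset (Fin T))).card : ℝ)) := by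
  classical
  obtain ⟨hX, hUU, hVV, hSd, hSpos, _⟩ := hsvd
  have hN : 0 < N := lt_of_le_of_lt (Nat.zero_le r) (lt_of_lt_of_le hr (min_le_left N T))
  have hT : 0 < T := lt_of_le_of_lt (Nat.zero_le r) (lt_of_lt_of_le hr (min_le_right N T))
  have hcIcard : (Finset.powersetCard mI (Finset.univ : Finset (Fin N))).card
      = N.choose mI := by
    rw [Finset.card_powersetCard, Finset.card_univ, Fintype.card_fin]
  have hcJcard : (Finset.powersetCard mJ (Finset.univ : Finset (Fin T))).card
      = T.choose mJ := by
    rw [Finset.card_powersetCard, Finset.card_univ, Fintype.card_fin]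
  have hcI0 : (0:ℝ) < ((Finset.powersetCard mI (Finset.univ : Finset (Fin N))).card : ℝ) := by
    rw [hcIcard]
    exact_mod_cast Nat.choose_pos hmIN
  have hcJ0 : (0:ℝ) < ((Finset.powersetCard mJ (Finset.univ : Finset (Fin T))).card : ℝ) := by
    rw [hcJcard]
    exact_mod_cast Nat.choose_pos hmJT
  by_cases hr0 : r = 0
  · subst hr0
    have hX0 : X = 0 := by
      rw [hX]
      ext i j
      simp [Matrix.mul_apply]
    have hall : ∀ p ∈ Finset.powersetCard mI (Finset.univ : Finset (Fin N)) ×ˢ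
        Finset.powersetCard mJ (Finset.univ : Finset (Fin T)),
        (X.submatrix (fun i : ↥p.1 => (i : Fin N)) (fun j : ↥p.2 => (j : Fin T))).rank = 0 := by
      intro p _
      rw [hX0]
      have : ((0 : Matrix (Fin N) (Fin T) ℝ).submatrix (fun i : ↥p.1 => (i : Fin N))
          (fun j : ↥p.2 => (j : Fin T))) = 0 := rfl
      rw [this, Matrix.rank_zero]
    rw [Finset.filter_true_of_mem hall, Finset.card_product]
    push_cast
    rw [div_self (ne_of_gt (mul_pos hcI0 hcJ0))]
    exact pow_le_one₀ (by linarith) (by linarith)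
  · have hrpos : 0 < r := Nat.pos_of_ne_zero hr0
    have hr1 : (1:ℝ) ≤ r := by exact_mod_cast hrpos
    -- row bounds
    have hrowU : ∀ i, ∑ j, U i j ^ 2 ≤ μ₁ * r / N :=
      row_bound U _ (by positivity) hU
    have hrowV : ∀ i, ∑ j, V i j ^ 2 ≤ μ₂ * r / T :=
      row_bound V _ (by positivity) hV
    -- sample-size bounds without ε
    have hε2 : 0 < ε ^ 2 := by positivity
    have hε21 : ε ^ 2 ≤ 1 := by nlinarith
    have hL0 : 0 ≤ Real.log (2 * r / δ) := by
      apply Real.log_nonneg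
      rw [le_div_iff₀ hδ0]
      nlinarith
    have hmI' : 3 * r * μ₁ * Real.log (2 * r / δ) ≤ (mI : ℝ) := by
      have ha : 0 ≤ 3 * (r:ℝ) * μ₁ * Real.log (2 * r / δ) := by positivity
      have := div_le_div_of_nonneg_left ha hε2 hε21
      rw [div_one] at this
      linarith [hmI]
    have hmJ' : 3 * r * μ₂ * Real.log (2 * r / δ) ≤ (mJ : ℝ) := by
      have ha : 0 ≤ 3 * (r:ℝ) * μ₂ * Real.log (2 * r / δ) := by positivity
      have := div_le_div_of_nonneg_left ha hε2 hε21
      rw [div_one] at this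
      linarith [hmJ]
    -- bad set bounds
    have hbadU := core hN hrpos U hUU μ₁ hμ₁ hrowU δ hδ0 hδ1 mI hmI'
    have hbadV := core hT hrpos V hVV μ₂ hμ₂ hrowV δ hδ0 hδ1 mJ hmJ'
    set goodU := (Finset.powersetCard mI (Finset.univ : Finset (Fin N))).filter
      (fun I => dSpan U I = r) with hgoodU
    set goodV := (Finset.powersetCard mJ (Finset.univ : Finset (Fin T))).filter
      (fun J => dSpan V J = r) with hgoodV
    have hgoodUcard : (1 - δ) * (N.choose mI : ℝ) ≤ (goodU.card : ℝ) := by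
      have hsplit := Finset.card_filter_add_card_filter_not
        (s := Finset.powersetCard mI (Finset.univ : Finset (Fin N)))
        (p := fun I => dSpan U I = r)
      have hsplitR : (goodU.card : ℝ) +
          (((Finset.powersetCard mI (Finset.univ : Finset (Fin N))).filter
            (fun I => ¬ dSpan U I = r)).card : ℝ) = (N.choose mI : ℝ) := by
        rw [← hcIcard]
        exact_mod_cast congrArg (Nat.cast : ℕ → ℝ) hsplit
      have : (((Finset.powersetCard mI (Finset.univ : Finset (Fin N))).filter
          (fun I => ¬ dSpan U I = r)).card : ℝ) ≤ δ * (N.choose mI : ℝ) := hbadU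
      linarith
    have hgoodVcard : (1 - δ) * (T.choose mJ : ℝ) ≤ (goodV.card : ℝ) := by
      have hsplit := Finset.card_filter_add_card_filter_not
        (s := Finset.powersetCard mJ (Finset.univ : Finset (Fin T)))
        (p := fun J => dSpan V J = r)
      have hsplitR : (goodV.card : ℝ) +
          (((Finset.powersetCard mJ (Finset.univ : Finset (Fin T))).filter
            (fun J => ¬ dSpan V J = r)).card : ℝ) = (T.choose mJ : ℝ) := by
        rw [← hcJcard]
        exact_mod_cast congrArg (Nat.cast : ℕ → ℝ) hsplit
      have : (((Finset.powersetCard mJ (Finset.univ : Finset (Fin T))).filter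
          (fun J => ¬ dSpan V J = r)).card : ℝ) ≤ δ * (T.choose mJ : ℝ) := hbadV
      linarith
    -- the good product lies inside the filtered set
    have hsubset : goodU ×ˢ goodV ⊆
        (Finset.powersetCard mI (Finset.univ : Finset (Fin N)) ×ˢ
          Finset.powersetCard mJ (Finset.univ : Finset (Fin T))).filter
          (fun p : Finset (Fin N) × Finset (Fin T) =>
            (X.submatrix (fun i : ↥p.1 => (i : Fin N))
              (fun j : ↥p.2 => (j : Fin T))).rank = r) := by
      intro p hp
      rw [Finset.mem_product] at hp
      obtain ⟨hp1, hp2⟩ := hp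
      rw [hgoodU, Finset.mem_filter] at hp1
      rw [hgoodV, Finset.mem_filter] at hp2
      refine Finset.mem_filter.2 ⟨Finset.mem_product.2 ⟨hp1.1, hp2.1⟩, ?_⟩
      refine rank_submatrix_full X U S V hX hSd hSpos p.1 p.2 ?_ ?_
      · rw [rank_submatrix_eq_dSpan]
        exact hp1.2
      · rw [rank_submatrix_eq_dSpan]
        exact hp2.2
    have hcardprod : (goodU.card : ℝ) * (goodV.card : ℝ) ≤
        ((((Finset.powersetCard mI (Finset.univ : Finset (Fin N)) ×ˢ
          Finset.powersetCard mJ (Finset.univ : Finset (Fin T))).filter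
          (fun p : Finset (Fin N) × Finset (Fin T) =>
            (X.submatrix (fun i : ↥p.1 => (i : Fin N))
              (fun j : ↥p.2 => (j : Fin T))).rank = r)).card : ℝ)) := by
      have h1 := Finset.card_le_card hsubset
      rw [Finset.card_product] at h1
      exact_mod_cast h1
    -- final arithmetic
    have hδ1' : (0:ℝ) ≤ 1 - δ := by linarith
    have hgU0 : (0:ℝ) ≤ (goodU.card : ℝ) := Nat.cast_nonneg _
    have h1 : (1 - δ) ^ 2 * (((Finset.powersetCard mI (Finset.univ : Finset (Fin N))).card : ℝ) *
        ((Finset.powersetCard mJ (Finset.univ : Finset (Fin T))).card : ℝ))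
        ≤ (goodU.card : ℝ) * (goodV.card : ℝ) := by
      rw [hcIcard, hcJcard]
      have ha : (1 - δ) * (N.choose mI : ℝ) ≥ 0 := by
        have : (0:ℝ) ≤ (N.choose mI : ℝ) := Nat.cast_nonneg _
        positivity
      calc (1 - δ) ^ 2 * ((N.choose mI : ℝ) * (T.choose mJ : ℝ))
          = ((1 - δ) * (N.choose mI : ℝ)) * ((1 - δ) * (T.choose mJ : ℝ)) := by ring
        _ ≤ (goodU.card : ℝ) * (goodV.card : ℝ) := by
            apply mul_le_mul hgoodUcard hgoodVcard ?_ hgU0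
            have : (0:ℝ) ≤ (T.choose mJ : ℝ) := Nat.cast_nonneg _
            positivity
    rw [le_div_iff₀ (mul_pos hcI0 hcJ0)]
    calc (1 - δ) ^ 2 * (((Finset.powersetCard mI (Finset.univ : Finset (Fin N))).card : ℝ) *
        ((Finset.powersetCard mJ (Finset.univ : Finset (Fin T))).card : ℝ))
        ≤ (goodU.card : ℝ) * (goodV.card : ℝ) := h1
      _ ≤ _ := hcardprod
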